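/- Let $A$ be an $n \times n$ real symmetric positive definite matrix, $\tau > 0$, $b \in \mathbb{R}^n$, and suppose $\alpha \in \mathbb{R}^n$ with $\alpha \ne 0$ satisfies $-b + A\alpha + \tau \|\alpha\|^{-1}\alpha = 0$. Then $\alpha = (A + \tau\|\alpha\|^{-1} I_n)^{-1} b$, and in particular $\|b\| > \tau$. -/

import Mathlib

open Matrix

/-- Euclidean norm of a vector in `ℝ^n`. -/
noncomputable def vnorm {n : ℕ} (x : Fin n → ℝ) : ℝ := Real.sqrt (∑ i, x i ^ 2)

lemma vnorm_eq {n : ℕ} (x : Fin n → ℝ) :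
    vnorm x = ‖(WithLp.equiv 2 (Fin n → ℝ)).symm x‖ := by
  rw [EuclideanSpace.norm_eq, vnorm]
  simp [sq_abs]

lemma vnorm_pos {n : ℕ} {x : Fin n → ℝ} (hx : x ≠ 0) : 0 < vnorm x := by
  rw [vnorm_eq]
  simpa using hx

lemma vnorm_cauchy {n : ℕ} (x y : Fin n → ℝ) : x ⬝ᵥ y ≤ vnorm x * vnorm y := by
  have h := real_inner_le_norm ((WithLp.equiv 2 (Fin n → ℝ)).symm x)
    ((WithLp.equiv 2 (Fin n → ℝ)).symm y)
  rw [vnorm_eq x, vnorm_eq y]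
  have hip : inner ℝ ((WithLp.equiv 2 (Fin n → ℝ)).symm x)
      ((WithLp.equiv 2 (Fin n → ℝ)).symm y) = x ⬝ᵥ y := by
    simp [PiLp.inner_apply, dotProduct, RCLike.inner_apply, mul_comm]
  rwa [hip] at h

/-- Stationarity equation for a nonzero group: if `α ≠ 0` satisfies
`-b + Aα + τ‖α‖⁻¹ α = 0` with `A` symmetric positive definite and `τ > 0`, then
`α = (A + τ‖α‖⁻¹ I)⁻¹ b` and `‖b‖ > τ`. -/
theorem group_stationarity (n : ℕ) (A : Matrix (Fin n) (Fin n) ℝ)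
    (hA : A.PosDef) (τ : ℝ) (hτ : 0 < τ) (b α : Fin n → ℝ) (hα : α ≠ 0)
    (hstat : -b + A.mulVec α + (vnorm α)⁻¹ • (τ • α) = 0) :
    α = (A + (τ * (vnorm α)⁻¹) • (1 : Matrix (Fin n) (Fin n) ℝ))⁻¹.mulVec b ∧
      τ < vnorm b := by
  set c : ℝ := τ * (vnorm α)⁻¹ with hc
  have hαpos : 0 < vnorm α := vnorm_pos hα
  have hcpos : 0 < c := mul_pos hτ (inv_pos.mpr hαpos)
  set M : Matrix (Fin n) (Fin n) ℝ := A + c • (1 : Matrix (Fin n) (Fin n) ℝ) with hM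
  have hMpd : M.PosDef := by
    refine hA.add_posSemidef ?_
    have : (c • (1 : Matrix (Fin n) (Fin n) ℝ)).PosDef := by
      refine Matrix.PosDef.of_dotProduct_mulVec_pos ?_ (fun x hx => ?_)
      · simp [Matrix.IsHermitian, Matrix.conjTranspose_smul]
      · rw [Matrix.smul_mulVec, Matrix.one_mulVec, dotProduct_smul]
        have : (0 : ℝ) < star x ⬝ᵥ x := by
          simpa using Matrix.dotProduct_star_self_pos_iff.mpr hx
        exact mul_pos hcpos this
    exact this.posSemidef
  have hb : M.mulVec α = b := by
    have h : b = A.mulVec α + (vnorm α)⁻¹ • (τ • α) := by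
      have := hstat
      funext i
      have := congrFun hstat i
      simp only [Pi.add_apply, Pi.neg_apply, Pi.zero_apply] at this
      simp only [Pi.add_apply]
      linarith
    rw [h, hM]
    rw [Matrix.add_mulVec, Matrix.smul_mulVec, Matrix.one_mulVec, smul_smul]
    ring_nf
    rw [hc, mul_comm τ]
  constructor
  · have hMu : IsUnit M := hMpd.isUnit
    have hinv : M⁻¹ * M = 1 := Matrix.nonsing_inv_mul M (Matrix.isUnit_iff_isUnit_det M |>.mp hMu)
    calc α = (M⁻¹ * M).mulVec α := by rw [hinv, Matrix.one_mulVec]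
    _ = M⁻¹.mulVec (M.mulVec α) := by rw [Matrix.mulVec_mulVec]
    _ = M⁻¹.mulVec b := by rw [hb]
  · -- inner product argument
    have hdot : α ⬝ᵥ b = α ⬝ᵥ A.mulVec α + c * (α ⬝ᵥ α) := by
      rw [← hb, hM, Matrix.add_mulVec, dotProduct_add, Matrix.smul_mulVec,
        Matrix.one_mulVec, dotProduct_smul, smul_eq_mul]
    have hApos : 0 < α ⬝ᵥ A.mulVec α := by
      have := hA.dotProduct_mulVec_pos hα
      simpa using this
    have hαα : α ⬝ᵥ α = (vnorm α) ^ 2 := by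
      rw [vnorm, Real.sq_sqrt (by positivity)]
      simp [dotProduct, sq]
    have hlow : τ * vnorm α < α ⬝ᵥ b := by
      rw [hdot, hαα]
      have : c * vnorm α ^ 2 = τ * vnorm α := by
        rw [hc]; field_simp
      nlinarith
    have hCS : α ⬝ᵥ b ≤ vnorm α * vnorm b := vnorm_cauchy α b
    nlinarith [lt_of_lt_of_le hlow hCS]
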